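/- Let ω be a state on a polarized C*-algebra (A, P̄). Then ω is a coherent state if and only if N_ω ∩ P̄ is a maximal ideal of the commutative Banach algebra P̄ (equivalently, a codimension-one ideal with P̄ = (N_ω ∩ P̄) ⊕ ℂ1). -/

import Mathlib

set_option linter.unusedSectionVars false

open scoped ComplexOrder InnerProductSpace

variable {A : Type*} [NormedRing A] [StarRing A] [CStarRing A] [NormedAlgebra ℂ A]
  [StarModule ℂ A] [CompleteSpace A]

/-- A state on a unital C*-algebra: a positive linear functional of norm one
(equivalently, taking the value 1 at the unit). -/
def IsState (ω : A →ₗ[ℂ] ℂ) : Prop :=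
  ω 1 = 1 ∧ ∀ x : A, 0 ≤ ω (star x * x)

/-- A polarization of a unital C*-algebra `A`: a closed commutative unital Banach
subalgebra `P` generating `A` (as a C*-algebra) with `P ∩ P* = ℂ·1`. -/
def IsPolarization (P : Subalgebra ℂ A) : Prop :=
  IsClosed (P : Set A) ∧
  (∀ a ∈ P, ∀ b ∈ P, a * b = b * a) ∧
  (Algebra.adjoin ℂ ((P : Set A) ∪ star (P : Set A))).topologicalClosure = ⊤ ∧
  (∀ x ∈ P, star x ∈ P → ∃ c : ℂ, x = algebraMap ℂ A c)

/-- A coherent state on the polarized C*-algebra `(A, P)`. -/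
def IsCoherentState (P : Subalgebra ℂ A) (ω : A →ₗ[ℂ] ℂ) : Prop :=
  IsState ω ∧ ∀ x : A, ∀ a ∈ P, ω (x * a) = ω x * ω a

/-- The polarized C*-algebra `(A, P)` admits norm normal ordering: finite sums
`∑ bₖ* aₖ` with `aₖ, bₖ ∈ P` are norm-dense in `A`. -/
def AdmitsNormalOrdering (P : Subalgebra ℂ A) : Prop :=
  Dense {x : A | ∃ (n : ℕ) (a b : Fin n → A), (∀ i, a i ∈ P ∧ b i ∈ P) ∧
    x = ∑ i, star (b i) * a i}

/-- `(π, H, v)` is a GNS triple for the state `ω`. -/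
def IsGNS {H : Type*} [NormedAddCommGroup H] [InnerProductSpace ℂ H] [CompleteSpace H]
    (ω : A →ₗ[ℂ] ℂ) (π : A →⋆ₐ[ℂ] (H →L[ℂ] H)) (v : H) : Prop :=
  ‖v‖ = 1 ∧ (∀ x : A, ω x = ⟪v, π x v⟫_ℂ) ∧
    Dense (Set.range fun x : A => π x v)

/-- A state takes scalar values on scalars. -/
lemma state_algebraMap (ω : A →ₗ[ℂ] ℂ) (hω : IsState ω) (c : ℂ) :
    ω (algebraMap ℂ A c) = c := by
  rw [Algebra.algebraMap_eq_smul_one, map_smul, hω.1, smul_eq_mul, mul_one]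

/-- A state is hermitian. -/
lemma state_star (ω : A →ₗ[ℂ] ℂ) (hω : IsState ω) (x : A) :
    ω (star x) = starRingEnd ℂ (ω x) := by
  have h0 : (ω (star x * x)).im = 0 := by
    have := hω.2 x; rw [Complex.nonneg_iff] at this; exact this.2.symm
  have h1 : (ω (star (1 + x) * (1 + x))).im = 0 := by
    have := hω.2 (1 + x); rw [Complex.nonneg_iff] at this; exact this.2.symm
  have h2 : (ω (star (1 + Complex.I • x) * (1 + Complex.I • x))).im = 0 := by
    have := hω.2 (1 + Complex.I • x); rw [Complex.nonneg_iff] at this; exact this.2.symm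
  have e1 : star (1 + x) * (1 + x) = 1 + x + star x + star x * x := by
    simp [star_add, add_mul, mul_add]; abel
  have e2 : star (1 + Complex.I • x) * (1 + Complex.I • x)
      = 1 + Complex.I • x + (starRingEnd ℂ Complex.I) • star x
        + ((starRingEnd ℂ Complex.I) * Complex.I) • (star x * x) := by
    simp only [star_add, star_one, star_smul, add_mul, mul_add, one_mul, mul_one,
      smul_mul_smul_comm, Complex.star_def]
    abel
  rw [e1] at h1
  rw [e2] at h2
  simp only [map_add, map_smul, hω.1, Complex.add_im, Complex.one_im, h0,
    Complex.smul_im, Complex.conj_I, Complex.mul_im] at h1 h2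
  have h2' : (ω x).re - (ω (star x)).re = 0 := by
    simp only [Complex.neg_re, Complex.neg_im, Complex.I_re, Complex.I_im,
      Complex.mul_re, Complex.mul_im, neg_mul, smul_eq_mul] at h2
    linarith [h2]
  apply Complex.ext
  · simp only [Complex.conj_re]; linarith [h2']
  · simp only [Complex.conj_im]; linarith [h1]

/-- If `ω (b* b) = 0` then `ω (x b) = 0` for every `x` (Cauchy–Schwarz). -/
lemma state_null (ω : A →ₗ[ℂ] ℂ) (hω : IsState ω) {b : A}
    (hb : ω (star b * b) = 0) (x : A) : ω (x * b) = 0 := by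
  set y : A := star x with hy
  have hxy : x = star y := by rw [hy, star_star]
  set c : ℂ := ω (x * b) with hc
  have hcy : ω (star b * y) = starRingEnd ℂ c := by
    have : star b * y = star (x * b) := by rw [hxy, star_mul, star_star]
    rw [this, state_star ω hω]
  by_contra hcne
  have hns : 0 < Complex.normSq c := Complex.normSq_pos.mpr hcne
  have hcc : c * starRingEnd ℂ c = (Complex.normSq c : ℂ) := Complex.mul_conj c
  have key : ∀ s : ℝ, 0 ≤ (ω (star y * y)).re - 2 * s * Complex.normSq c := by
    intro s
    set t : ℂ := (-(s : ℂ)) * starRingEnd ℂ c with ht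
    have hpos := hω.2 (y + t • b)
    have e : star (y + t • b) * (y + t • b)
        = star y * y + t • (star y * b) + (starRingEnd ℂ t) • (star b * y)
          + (t * starRingEnd ℂ t) • (star b * b) := by
      simp only [star_add, star_smul, add_mul, mul_add, smul_mul_assoc,
        mul_smul_comm, Complex.star_def, smul_smul, smul_add, mul_comm]
      abel
    rw [e] at hpos
    have hyb : ω (star y * b) = c := by rw [hc, hxy]
    simp only [map_add, map_smul, hyb, hcy, hb, smul_eq_mul, mul_zero, add_zero] at hpos
    have hval : t * c + starRingEnd ℂ t * starRingEnd ℂ c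
        = ((-(2 * s * Complex.normSq c) : ℝ) : ℂ) := by
      rw [ht, map_mul, map_neg, Complex.conj_conj, Complex.conj_ofReal, mul_assoc, mul_assoc,
        mul_comm (starRingEnd ℂ c) c, hcc]
      push_cast
      ring
    have hsum : ω (star y * y) + t * c + starRingEnd ℂ t * starRingEnd ℂ c
        = ω (star y * y) + ((-(2 * s * Complex.normSq c) : ℝ) : ℂ) := by
      rw [add_assoc, hval]
    rw [hsum, Complex.nonneg_iff] at hpos
    have h1 := hpos.1
    simp only [Complex.add_re, Complex.ofReal_re] at h1
    linarith
  set r : ℝ := (ω (star y * y)).re with hr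
  have hkey := key ((r + 1) / (2 * Complex.normSq c))
  have h2c : (2 : ℝ) * Complex.normSq c ≠ 0 := by positivity
  have : 2 * ((r + 1) / (2 * Complex.normSq c)) * Complex.normSq c = r + 1 := by
    field_simp
  rw [this] at hkey
  linarith

/-- A state `ω` on a polarized C*-algebra `(A, P̄)` is coherent if and only
if `N_ω ∩ P̄` is a maximal ideal of the commutative Banach algebra `P̄`. -/
theorem stmt_8 (P : Subalgebra ℂ A) (hP : IsPolarization P)
    (ω : A →ₗ[ℂ] ℂ) (hω : IsState ω) :
    IsCoherentState P ω ↔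
      ∃ I : Ideal P, I.IsMaximal ∧ ∀ x : P, x ∈ I ↔ ω (star (x : A) * (x : A)) = 0 := by
  constructor
  · intro hc
    -- `ω` restricted to `P` is a character; its kernel works.
    let φ : P →ₐ[ℂ] ℂ :=
    { toFun := fun p => ω (p : A)
      map_one' := hω.1
      map_mul' := fun p q => hc.2 (p : A) (q : A) q.2
      map_zero' := by simp
      map_add' := fun p q => by push_cast; rw [map_add]
      commutes' := fun c => by
        simp only [Algebra.algebraMap_eq_smul_one, Subalgebra.coe_smul, OneMemClass.coe_one,
          map_smul, hω.1, smul_eq_mul, mul_one, id_eq] }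
    refine ⟨RingHom.ker φ.toRingHom, RingHom.ker_isMaximal_of_surjective _ ?_, fun x => ?_⟩
    · intro c
      exact ⟨algebraMap ℂ P c, φ.commutes c⟩
    · have hmul : ω (star (x : A) * (x : A)) = starRingEnd ℂ (ω (x : A)) * ω (x : A) := by
        rw [hc.2 (star (x : A)) (x : A) x.2, state_star ω hω]
      rw [RingHom.mem_ker, hmul]
      have hx : φ.toRingHom x = ω (x : A) := rfl
      rw [hx]
      constructor
      · intro h; rw [h, map_zero, zero_mul]
      · intro h
        have h' : Complex.normSq (ω (x : A)) = 0 := by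
          rw [mul_comm, Complex.mul_conj] at h
          exact_mod_cast h
        exact Complex.normSq_eq_zero.mp h'
  · rintro ⟨I, hImax, hImem⟩
    -- Make `P` a commutative complex Banach algebra and apply Gelfand–Mazur.
    letI : NormedCommRing P :=
      { (inferInstance : NormedRing P) with
        mul_comm := fun p q => Subtype.ext (hP.2.1 (p : A) p.2 (q : A) q.2) }
    haveI : CompleteSpace P := hP.1.completeSpace_coe
    haveI : I.IsMaximal := hImax
    let ψ : P →ₐ[ℂ] ℂ := WeakDual.CharacterSpace.equivAlgHom I.toCharacterSpace
    have hψI : I = RingHom.ker ψ.toRingHom := by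
      refine (hImax.eq_of_le ?_ ?_).symm |>.symm ▸ rfl
      · intro h
        have h1 : ψ 1 = 1 := map_one ψ
        have := (Ideal.eq_top_iff_one _).mp h
        rw [RingHom.mem_ker] at this
        simp only [AlgHom.toRingHom_eq_coe, RingHom.coe_coe] at this
        rw [h1] at this; exact one_ne_zero this
      · intro p hp
        rw [RingHom.mem_ker]
        exact I.toCharacterSpace_apply_eq_zero_of_mem hp
    have hker : ∀ p : P, p - algebraMap ℂ P (ψ p) ∈ I := by
      intro p
      rw [hψI, RingHom.mem_ker]
      simp [map_sub, ψ.commutes]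
    refine ⟨hω, fun x a ha => ?_⟩
    set p : P := ⟨a, ha⟩ with hp
    set b : A := a - algebraMap ℂ A (ψ p) with hbdef
    have hbcoe : ((p - algebraMap ℂ P (ψ p) : P) : A) = b := by
      push_cast [hbdef]
      rfl
    have hb : ω (star b * b) = 0 := by
      have := (hImem _).mp (hker p)
      rwa [hbcoe] at this
    have hnull := state_null ω hω hb
    have hωa : ω a = ψ p := by
      have := hnull 1
      rw [one_mul, hbdef, map_sub, state_algebraMap ω hω, sub_eq_zero] at this
      exact this
    have hxb := hnull x
    have hsplit : x * a = x * b + (ψ p) • x := by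
      rw [hbdef, mul_sub, Algebra.algebraMap_eq_smul_one, mul_smul_comm, mul_one]
      abel
    rw [hsplit, map_add, hxb, zero_add, map_smul, hωa, smul_eq_mul, mul_comm]
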